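/- Let n ≥ 2 and let A = {a₁, a₁⁻¹, …, aₙ, aₙ⁻¹} (so |A| = 2n ≥ 4). Let w be a nonempty reduced word over A, let b₁, b₂, d₁, d₂ ∈ A be letters such that the word d₁ (b₁ w b₂)² d₂ is reduced, let c ∈ A be a letter with c ∉ {b₂, b₂⁻¹}, and set n_w = |w| + 1. Define z₄(w) = b₁ w b₂ c^{n_w+1} b₂ · b₁ w b₂ c^{n_w+2} b₂ · b₁ w b₂ c^{n_w+3} b₂ · b₁ w b₂ c^{n_w+4} b₂. Then the word d₁ z₄(w) d₂ is reduced. -/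

import Mathlib

/-- A letter of the alphabet `A = {a₁, a₁⁻¹, …, aₙ, aₙ⁻¹}`. -/
abbrev Letter (n : ℕ) := Fin n × Bool

/-- The inverse letter. -/
def Letter.inv {n : ℕ} (x : Letter n) : Letter n := (x.1, !x.2)

/-- A word is reduced if it is nonempty and no letter is followed by its inverse. -/
def ReducedWord {n : ℕ} (w : List (Letter n)) : Prop :=
  w ≠ [] ∧ w.Chain' fun a b => b ≠ a.inv

/-- The `i`-th syllable `b₁ w b₂ c^{n_w + i} b₂` of `z₄(w)`, where `n_w = |w| + 1`. -/
def syl {n : ℕ} (b₁ b₂ c : Letter n) (w : List (Letter n)) (i : ℕ) : List (Letter n) :=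
  [b₁] ++ w ++ [b₂] ++ List.replicate (w.length + 1 + i) c ++ [b₂]

/-- The word `z₄(w) = b₁wb₂c^{n_w+1}b₂ · b₁wb₂c^{n_w+2}b₂ · b₁wb₂c^{n_w+3}b₂ · b₁wb₂c^{n_w+4}b₂`. -/
def z4 {n : ℕ} (b₁ b₂ c : Letter n) (w : List (Letter n)) : List (Letter n) :=
  syl b₁ b₂ c w 1 ++ syl b₁ b₂ c w 2 ++ syl b₁ b₂ c w 3 ++ syl b₁ b₂ c w 4

namespace Aux
variable {n : ℕ}

lemma self_ne_inv (x : Letter n) : x ≠ x.inv := by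
  simp [Letter.inv, Prod.ext_iff]

lemma rep_chain (k : ℕ) (c : Letter n) :
    (List.replicate k c).Chain' (fun a b => b ≠ a.inv) := by
  induction k with
  | zero => exact List.isChain_nil
  | succ k ih =>
    rw [List.replicate_succ]
    exact List.isChain_cons.mpr ⟨fun y hy => by
      cases k with
      | zero => simp at hy
      | succ m => simp [List.replicate_succ] at hy; subst hy; exact self_ne_inv c, ih⟩

lemma syl_head (b₁ b₂ c : Letter n) (w : List (Letter n)) (i : ℕ) :
    (syl b₁ b₂ c w i).head? = some b₁ := by
  simp [syl]

lemma syl_last (b₁ b₂ c : Letter n) (w : List (Letter n)) (i : ℕ) :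
    (syl b₁ b₂ c w i).getLast? = some b₂ := by
  rw [syl, List.getLast?_concat]

lemma syl_chain (b₁ b₂ c : Letter n) (w : List (Letter n)) (i : ℕ)
    (hcore : ([b₁] ++ w ++ [b₂]).Chain' (fun a b => b ≠ a.inv))
    (h1 : c ≠ b₂.inv) (h2 : b₂ ≠ c.inv) :
    (syl b₁ b₂ c w i).Chain' (fun a b => b ≠ a.inv) := by
  obtain ⟨m, hm⟩ : ∃ m, w.length + 1 + i = m + 1 := ⟨w.length + i, by omega⟩
  rw [syl, hm, List.Chain', List.isChain_append, List.isChain_append]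
  refine ⟨⟨hcore, rep_chain _ c, ?_⟩, by simp, ?_⟩
  · intro x hx y hy
    rw [List.getLast?_concat] at hx
    rw [List.replicate_succ] at hy
    simp at hx hy
    subst hx; subst hy; exact h1
  · intro x hx y hy
    simp at hy; subst hy
    rw [List.replicate_succ', ← List.append_assoc, List.getLast?_concat] at hx
    simp at hx; subst hx; exact h2
end Aux

theorem d1_z4_d2_reduced
    (n : ℕ) (hn : 2 ≤ n)
    (w : List (Letter n)) (hw : ReducedWord w)
    (b₁ b₂ d₁ d₂ c : Letter n)
    (hred : ReducedWord ([d₁] ++ [b₁] ++ w ++ [b₂] ++ [b₁] ++ w ++ [b₂] ++ [d₂]))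
    (hc₁ : c ≠ b₂) (hc₂ : c ≠ b₂.inv) :
    ReducedWord ([d₁] ++ z4 b₁ b₂ c w ++ [d₂]) := by
  have h := hred.2
  rw [show [d₁]++[b₁]++w++[b₂]++[b₁]++w++[b₂]++[d₂]
      = [d₁] ++ ((([b₁]++w++[b₂]) ++ ([b₁]++w++[b₂])) ++ [d₂]) by simp] at h
  rw [List.Chain', List.isChain_append, List.isChain_append, List.isChain_append] at h
  obtain ⟨-, ⟨⟨hcore, -, hgl2⟩, -, hgl3⟩, hgl1⟩ := h
  have hlastcore : (([b₁]:List (Letter n)) ++ w ++ [b₂]).getLast? = some b₂ :=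
    List.getLast?_concat
  have hb1d1 : b₁ ≠ d₁.inv := by
    have := hgl1 d₁ (by simp) b₁ (by simp)
    simpa using this
  have hb1b2 : b₁ ≠ b₂.inv := by
    have := hgl2 b₂ hlastcore b₁ (by simp)
    simpa using this
  have hd2b2 : d₂ ≠ b₂.inv := by
    have := hgl3 b₂ (by rw [List.getLast?_append_of_ne_nil _ (by simp), hlastcore]; rfl) d₂ (by simp)
    simpa using this
  have hb2c : b₂ ≠ c.inv := by
    intro hE; apply hc₂; rw [hE]; simp [Letter.inv]
  have hSyl : ∀ i, (syl b₁ b₂ c w i).Chain' (fun a b => b ≠ a.inv) :=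
    fun i => Aux.syl_chain b₁ b₂ c w i hcore hc₂ hb2c
  have hglue2 : ∀ i j, ((syl b₁ b₂ c w i) ++ (syl b₁ b₂ c w j)).Chain' (fun a b => b ≠ a.inv) →
      True := fun _ _ _ => trivial
  have hz4 : (z4 b₁ b₂ c w).Chain' (fun a b => b ≠ a.inv) := by
    rw [z4]
    have key : ∀ (l : List (Letter n)) j, l.getLast? = some b₂ →
        l.Chain' (fun a b => b ≠ a.inv) →
        (l ++ syl b₁ b₂ c w j).Chain' (fun a b => b ≠ a.inv) := by
      intro l j hl hcl
      refine List.IsChain.append hcl (hSyl j) ?_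
      intro x hx y hy
      rw [hl] at hx; rw [Aux.syl_head] at hy
      simp at hx hy; subst hx; subst hy; exact hb1b2
    have l2 := key _ 2 (Aux.syl_last b₁ b₂ c w 1) (hSyl 1)
    have l3 := key _ 3 (by rw [List.getLast?_append_of_ne_nil _ (by simp [syl]), Aux.syl_last]) l2
    have l4 := key _ 4 (by rw [List.getLast?_append_of_ne_nil _ (by simp [syl]), Aux.syl_last]) l3
    exact l4
  refine ⟨by simp, ?_⟩
  refine List.IsChain.append ?_ (by simp) ?_
  · refine List.IsChain.append (by simp) hz4 ?_
    intro x hx y hy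
    simp at hx; subst hx
    rw [show (z4 b₁ b₂ c w).head? = some b₁ by rw [z4]; simp [syl]] at hy
    simp at hy; subst hy; exact hb1d1
  · intro x hx y hy
    simp at hy; subst hy
    rw [List.getLast?_append_of_ne_nil _ (by simp [z4, syl]),
      show (z4 b₁ b₂ c w).getLast? = some b₂ by
        rw [z4, List.getLast?_append_of_ne_nil _ (by simp [syl]), Aux.syl_last]] at hx
    simp at hx; subst hx; exact hd2b2
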